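/- Let $(N,\phi)$ be an isocrystal over $\breve F$ of dimension $n$, where $\phi$ is a $\sigma$-linear automorphism isoclinic of slope $1/n$ (equivalently, topologically nilpotent with $\phi^n$ having the same lattice-behavior as multiplication by the uniformizer $\pi$). Let $M\subset N$ be an $O_{\breve F}$-lattice with $\phi(M)\subset M$ and $[M:\phi(M)] = 1$. Then all inclusions in the chain $M \supset \phi(M) \supset \phi^2(M)+\pi M \supset \phi^3(M)+\pi M \supset \cdots \supset \phi^n(M)+\pi M$ are strict, and consequently $\phi^n(M)=\pi M$. -/

import Mathlib

open Pointwise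

/-- The chain of lattices `M ⊇ φ(M) ⊇ φ²(M) ⊇ ⋯` : `iterImage φ M k = φᵏ(M)`. -/
def iterImage {O N : Type*} [CommRing O] [AddCommGroup N] [Module O N]
    {σ : O →+* O} [RingHomSurjective σ] (φ : N →ₛₗ[σ] N) (M : Submodule O N) :
    ℕ → Submodule O N
  | 0 => M
  | k + 1 => Submodule.map φ (iterImage φ M k)

/-- The chain `M ⊃ φ(M) ⊃ φ²(M) + πM ⊃ φ³(M) + πM ⊃ ⋯`. -/
def chainD {O N : Type*} [CommRing O] [AddCommGroup N] [Module O N]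
    {σ : O →+* O} [RingHomSurjective σ] (π : O) (φ : N →ₛₗ[σ] N)
    (M : Submodule O N) : ℕ → Submodule O N
  | 0 => M
  | 1 => Submodule.map φ M
  | (k + 2) => iterImage φ M (k + 2) ⊔ Ideal.span {π} • M

namespace IsoAux

variable {O : Type*} [CommRing O]

lemma mem_ideal_span_singleton_smul {N : Type*} [AddCommGroup N] [Module O N]
    (r : O) (A : Submodule O N) (x : N) :
    x ∈ Ideal.span {r} • A ↔ ∃ a ∈ A, r • a = x := by
  rw [Submodule.ideal_span_singleton_smul]
  constructor
  · intro h
    have : x ∈ (↑(r • A) : Set N) := h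
    rw [Submodule.coe_pointwise_smul] at this
    obtain ⟨a, ha, rfl⟩ := this
    exact ⟨a, ha, rfl⟩
  · rintro ⟨a, ha, rfl⟩
    exact Submodule.smul_mem_pointwise_smul a r A ha

section Quot

variable {M' : Type*} [AddCommGroup M'] [Module O M']

lemma quot_smul_eq (I : Ideal O) (c : O) (z : M' ⧸ (I • ⊤ : Submodule O M')) :
    (Ideal.Quotient.mk I c) • z = c • z := by
  refine Submodule.Quotient.induction_on _ z fun m => ?_
  rw [Module.Quotient.mk_smul_mk, Submodule.Quotient.mk_smul]

/-- An `O`-submodule of `M' ⧸ I•⊤`, viewed as an `O⧸I`-submodule. -/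
def toK (I : Ideal O) (X : Submodule O (M' ⧸ (I • ⊤ : Submodule O M'))) :
    Submodule (O ⧸ I) (M' ⧸ (I • ⊤ : Submodule O M')) where
  carrier := X
  add_mem' := fun h1 h2 => X.add_mem h1 h2
  zero_mem' := X.zero_mem
  smul_mem' := by
    rintro k v hv
    obtain ⟨c, rfl⟩ := Ideal.Quotient.mk_surjective k
    rw [quot_smul_eq]
    exact X.smul_mem c hv

lemma mem_toK {I : Ideal O} {X : Submodule O (M' ⧸ (I • ⊤ : Submodule O M'))}
    {x : M' ⧸ (I • ⊤ : Submodule O M')} : x ∈ toK I X ↔ x ∈ X := Iff.rfl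

lemma span_O_le_span_K (I : Ideal O) (s : Set (M' ⧸ (I • ⊤ : Submodule O M')))
    {z : M' ⧸ (I • ⊤ : Submodule O M')} (hz : z ∈ Submodule.span O s) :
    z ∈ Submodule.span (O ⧸ I) s := by
  induction hz using Submodule.span_induction with
  | mem _ h => exact Submodule.subset_span h
  | zero => exact zero_mem _
  | add _ _ _ _ h1 h2 => exact add_mem h1 h2
  | smul c z _ h => rw [← quot_smul_eq]; exact Submodule.smul_mem _ _ h

/-- The induced basis of `M'⧸πM'` over `O⧸π`. -/
noncomputable def quotBasis (π : O) {n : ℕ} (b : Module.Basis (Fin n) O M') :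
    Module.Basis (Fin n) (O ⧸ Ideal.span {π})
      (M' ⧸ (Ideal.span {π} • ⊤ : Submodule O M')) := by
  set p : Submodule O M' := Ideal.span {π} • ⊤ with hp
  refine Module.Basis.mk (v := fun i => p.mkQ (b i)) ?_ ?_
  · rw [Fintype.linearIndependent_iff]
    intro g hg i
    choose c hc using fun i => Ideal.Quotient.mk_surjective (g i)
    have h1 : p.mkQ (∑ j, c j • b j) = 0 := by
      rw [map_sum]
      rw [← hg]
      refine Finset.sum_congr rfl fun j _ => ?_
      rw [map_smul, ← hc j, quot_smul_eq]
    rw [show p.mkQ _ = Submodule.Quotient.mk _ from rfl, Submodule.Quotient.mk_eq_zero] at h1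
    obtain ⟨m, -, hm⟩ := (mem_ideal_span_singleton_smul π ⊤ _).mp h1
    have hci : c i = π * b.repr m i := by
      have h2 := b.repr_sum_self c
      have h3 : b.repr (∑ j, c j • b j) i = b.repr (π • m) i := by rw [hm]
      rw [h2] at h3
      rw [h3, map_smul, Finsupp.smul_apply, smul_eq_mul]
    rw [← hc i, Ideal.Quotient.eq_zero_iff_mem, Ideal.mem_span_singleton]
    exact ⟨b.repr m i, hci⟩
  · rintro z -
    obtain ⟨m, rfl⟩ := Submodule.Quotient.mk_surjective p z
    rw [show (Submodule.Quotient.mk m : M' ⧸ p) = p.mkQ m from rfl, ← b.sum_repr m, map_sum]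
    refine Submodule.sum_mem _ fun j _ => ?_
    rw [map_smul, ← quot_smul_eq]
    exact Submodule.smul_mem _ _ (Submodule.subset_span ⟨j, rfl⟩)

variable [IsDomain O] [IsDiscreteValuationRing O]

lemma span_pi_isMaximal {π : O} (hπ : Irreducible π) : (Ideal.span {π}).IsMaximal := by
  rw [← (IsDiscreteValuationRing.irreducible_iff_uniformizer π).mp hπ]
  exact IsLocalRing.maximalIdeal.isMaximal O

/-- If `M'` is free of rank `n` and `M' = πM' + span of k elements` then `n ≤ k`. -/
lemma span_bound {π : O} (hπ : Irreducible π) {n : ℕ} (b : Module.Basis (Fin n) O M')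
    {k : ℕ} (w : Fin k → M')
    (hspan : (⊤ : Submodule O M') ≤
      (Ideal.span {π} • ⊤ : Submodule O M') ⊔ Submodule.span O (Set.range w)) :
    n ≤ k := by
  haveI := span_pi_isMaximal hπ
  letI : Field (O ⧸ Ideal.span {π}) := Ideal.Quotient.field _
  have b' := quotBasis π b
  haveI : Module.Finite (O ⧸ Ideal.span {π})
      (M' ⧸ (Ideal.span {π} • ⊤ : Submodule O M')) := Module.Finite.of_basis b'
  have hrk : Module.finrank (O ⧸ Ideal.span {π})
      (M' ⧸ (Ideal.span {π} • ⊤ : Submodule O M')) = n := by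
    rw [Module.finrank_eq_card_basis b', Fintype.card_fin]
  have hsp : Submodule.span (O ⧸ Ideal.span {π})
      (Set.range fun i => (Ideal.span {π} • ⊤ : Submodule O M').mkQ (w i)) = ⊤ := by
    rw [eq_top_iff]
    rintro z -
    obtain ⟨m, rfl⟩ := Submodule.Quotient.mk_surjective
      (Ideal.span {π} • ⊤ : Submodule O M') z
    have hm := hspan (Submodule.mem_top (x := m))
    obtain ⟨a, ha, c, hc, hsum⟩ := Submodule.mem_sup.mp hm
    have h0 : (Ideal.span {π} • ⊤ : Submodule O M').mkQ a = 0 := by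
      rw [show (Ideal.span {π} • ⊤ : Submodule O M').mkQ a = Submodule.Quotient.mk a from rfl,
        Submodule.Quotient.mk_eq_zero]
      exact ha
    have heq : (Submodule.Quotient.mk m : M' ⧸ (Ideal.span {π} • ⊤ : Submodule O M')) =
        (Ideal.span {π} • ⊤ : Submodule O M').mkQ c := by
      rw [show (Submodule.Quotient.mk m : M' ⧸ (Ideal.span {π} • ⊤ : Submodule O M')) =
        (Ideal.span {π} • ⊤ : Submodule O M').mkQ m from rfl, ← hsum, map_add, h0, zero_add]
    rw [heq]
    refine span_O_le_span_K _ _ ?_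
    have h2 := Submodule.mem_map_of_mem (f := (Ideal.span {π} • ⊤ : Submodule O M').mkQ) hc
    rwa [Submodule.map_span, ← Set.range_comp] at h2
  have h3 := finrank_range_le_card (R := (O ⧸ Ideal.span {π}))
    fun i => (Ideal.span {π} • ⊤ : Submodule O M').mkQ (w i)
  rw [Set.finrank, hsp, finrank_top, hrk, Fintype.card_fin] at h3
  exact h3

/-- A strictly decreasing chain of `n` steps starting from `⊤` and staying above `πM'`
must end at `πM'` when `M'` is free of rank `n`. -/
lemma chain_bound {π : O} (hπ : Irreducible π) {n : ℕ} (b : Module.Basis (Fin n) O M')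
    (E : ℕ → Submodule O M') (hE0 : E 0 = ⊤)
    (hEp : ∀ k, (Ideal.span {π} • ⊤ : Submodule O M') ≤ E k)
    (hE : ∀ k < n, E (k + 1) < E k) :
    E n ≤ (Ideal.span {π} • ⊤ : Submodule O M') := by
  haveI := span_pi_isMaximal hπ
  letI : Field (O ⧸ Ideal.span {π}) := Ideal.Quotient.field _
  have b' := quotBasis π b
  haveI : Module.Finite (O ⧸ Ideal.span {π})
      (M' ⧸ (Ideal.span {π} • ⊤ : Submodule O M')) := Module.Finite.of_basis b'
  have hrk : Module.finrank (O ⧸ Ideal.span {π})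
      (M' ⧸ (Ideal.span {π} • ⊤ : Submodule O M')) = n := by
    rw [Module.finrank_eq_card_basis b', Fintype.card_fin]
  set U : ℕ → Submodule (O ⧸ Ideal.span {π}) (M' ⧸ (Ideal.span {π} • ⊤ : Submodule O M')) :=
    fun k => toK _ (Submodule.map (Ideal.span {π} • ⊤ : Submodule O M').mkQ (E k)) with hU
  have hUstrict : ∀ k < n, U (k + 1) < U k := by
    intro k hk
    have hlt := hE k hk
    refine lt_of_le_of_ne (fun x hx => ?_) fun heq => ?_
    · exact mem_toK.mpr
        (Submodule.map_mono (f := (Ideal.span {π} • ⊤ : Submodule O M').mkQ) hlt.le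
          (mem_toK.mp hx))
    · have hcar : Submodule.map (Ideal.span {π} • ⊤ : Submodule O M').mkQ (E (k + 1)) =
          Submodule.map (Ideal.span {π} • ⊤ : Submodule O M').mkQ (E k) := by
        ext t
        have ht := SetLike.ext_iff.mp heq t
        exact ⟨fun h => mem_toK.mp (ht.mp (mem_toK.mpr h)),
          fun h => mem_toK.mp (ht.mpr (mem_toK.mpr h))⟩
      have h2 := congrArg (Submodule.comap (Ideal.span {π} • ⊤ : Submodule O M').mkQ) hcar
      rw [Submodule.comap_map_eq, Submodule.comap_map_eq, Submodule.ker_mkQ,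
        sup_eq_left.mpr (hEp (k + 1)), sup_eq_left.mpr (hEp k)] at h2
      exact hlt.ne h2
  have hU0 : U 0 = ⊤ := by
    rw [hU]
    simp only [hE0, Submodule.map_top, Submodule.range_mkQ]
    ext t
    simp [mem_toK]
  have hcount : ∀ k, k ≤ n → Module.finrank (O ⧸ Ideal.span {π}) (U k) + k ≤ n := by
    intro k
    induction k with
    | zero =>
      intro _
      have h0 : Module.finrank (O ⧸ Ideal.span {π}) (U 0) = n := by
        rw [hU0, finrank_top, hrk]
      omega
    | succ k ih =>
      intro hk1
      have hk : k < n := hk1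
      have h1 := Submodule.finrank_lt_finrank_of_lt (hUstrict k hk)
      have h2 := ih hk.le
      omega
  have hUn : U n = ⊥ := by
    have h1 := hcount n le_rfl
    have hz : Module.finrank (O ⧸ Ideal.span {π}) (U n) = 0 := by omega
    exact Submodule.finrank_eq_zero.mp hz
  intro x hx
  have h1 : (Ideal.span {π} • ⊤ : Submodule O M').mkQ x ∈ U n :=
    mem_toK.mpr (Submodule.mem_map_of_mem hx)
  rw [hUn] at h1
  have h2 : (Ideal.span {π} • ⊤ : Submodule O M').mkQ x = 0 := h1
  rw [show (Ideal.span {π} • ⊤ : Submodule O M').mkQ x = Submodule.Quotient.mk x from rfl,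
    Submodule.Quotient.mk_eq_zero] at h2
  exact h2

end Quot

/-- Dichotomy for submodules between `A` and `A ⊔ span {y}` over a DVR. -/
lemma dvr_dichotomy [IsDomain O] [IsDiscreteValuationRing O] {π : O} (hπ : Irreducible π)
    {N : Type*} [AddCommGroup N] [Module O N] {A B : Submodule O N} {y : N}
    (hy : π • y ∈ A) (hAB : A ≤ B) (hBA : B ≤ A ⊔ Submodule.span O {y}) :
    B = A ∨ B = A ⊔ Submodule.span O {y} := by
  by_cases hyB : y ∈ B
  · right
    exact le_antisymm hBA (sup_le hAB (Submodule.span_le.mpr (by simpa using hyB)))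
  · left
    refine le_antisymm (fun v hv => ?_) hAB
    obtain ⟨a, ha, z, hz, rfl⟩ := Submodule.mem_sup.mp (hBA hv)
    obtain ⟨c, rfl⟩ := Submodule.mem_span_singleton.mp hz
    by_cases hc : IsUnit c
    · exfalso
      apply hyB
      have h1 : c • y ∈ B := by
        have h2 : a ∈ B := hAB ha
        have := B.sub_mem hv h2
        simpa using this
      obtain ⟨u, rfl⟩ := hc
      have h3 := B.smul_mem ((↑u⁻¹ : O)) h1
      rwa [smul_smul, Units.inv_mul, one_smul] at h3
    · refine A.add_mem ha ?_
      have hcm : c ∈ IsLocalRing.maximalIdeal O := (IsLocalRing.mem_maximalIdeal c).mpr hc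
      rw [(IsDiscreteValuationRing.irreducible_iff_uniformizer π).mp hπ] at hcm
      obtain ⟨d, rfl⟩ := Ideal.mem_span_singleton.mp hcm
      rw [mul_comm, mul_smul]
      exact A.smul_mem d hy

end IsoAux
set_option maxHeartbeats 1000000 in
/-- Let `O` be a complete DVR with uniformizer `π` and Frobenius-like ring
automorphism `σ`, and let `(N, φ)` be an isocrystal with `φ` a `σ`-semilinear
bijection which is isoclinic of slope `1/n`; in particular `φ` is topologically
nilpotent. Let `M` be a lattice of rank `n` (a free `O`-submodule with basis `Fin n`)
with `φ(M) ⊆ M` of colength `1` (i.e. `M/φ(M)` is a simple `O`-module). Then all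
inclusions in the chain `M ⊃ φ(M) ⊃ φ²(M)+πM ⊃ ⋯ ⊃ φⁿ(M)+πM` are strict, and
consequently `φⁿ(M) = πM`. -/
theorem isocrystal_chain_strict_and_phi_pow_eq
    {O : Type*} [CommRing O] [IsDomain O] [IsDiscreteValuationRing O]
    (π : O) (hπ : Irreducible π)
    {N : Type*} [AddCommGroup N] [Module O N]
    (σ : O →+* O) [RingHomSurjective σ] (hσ : Function.Bijective σ)
    (φ : N →ₛₗ[σ] N) (hφ : Function.Bijective φ)
    (M : Submodule O N) (n : ℕ) (hn : 0 < n)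
    (bM : Module.Basis (Fin n) O ↥M)
    (hsub : Submodule.map φ M ≤ M)
    (hcolength_one :
      IsSimpleModule O (↥M ⧸ Submodule.comap M.subtype (Submodule.map φ M)))
    (htop_nilpotent : ∃ j : ℕ, iterImage φ M j ≤ Ideal.span {π} • M) :
    (∀ k < n, chainD π φ M (k + 1) < chainD π φ M k) ∧
    iterImage φ M n = Ideal.span {π} • M := by
  classical
  obtain ⟨j, hjP⟩ := htop_nilpotent
  -- Notation
  have hPM : (Ideal.span {π} • M : Submodule O N) ≤ M := Submodule.smul_le_right
  -- basic iterImage facts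
  have h_iter_anti : ∀ k, iterImage φ M (k + 1) ≤ iterImage φ M k := by
    intro k
    induction k with
    | zero => exact hsub
    | succ k ih => exact Submodule.map_mono ih
  have h_iter_le : ∀ k, iterImage φ M k ≤ M := by
    intro k
    induction k with
    | zero => exact le_rfl
    | succ k ih => exact (Submodule.map_mono ih).trans hsub
  -- the ring equivalence associated to σ
  let e : O ≃+* O := RingEquiv.ofBijective σ hσ
  have hcoe : ∀ a : O, e a = σ a := fun _ => rfl
  have hspan_e : ∀ f : O ≃+* O, Ideal.span {f π} = Ideal.span {π} := fun f =>
    Ideal.span_singleton_eq_span_singleton.mpr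
      (IsDiscreteValuationRing.associated_of_irreducible O (hπ.map f) hπ)
  have he_mem : ∀ (f : O ≃+* O), ∀ r ∈ Ideal.span {π}, f r ∈ Ideal.span {π} := by
    intro f r hr
    obtain ⟨d, hd⟩ := Ideal.mem_span_singleton.mp hr
    rw [hd, map_mul]
    refine Ideal.mul_mem_right _ _ ?_
    rw [← hspan_e f]
    exact Ideal.mem_span_singleton_self _
  -- the quotient by φ(M) is simple; get the annihilation by π and a generator
  have hSsimple : IsSimpleModule O (↥M ⧸ Submodule.comap M.subtype (Submodule.map φ M)) :=
    hcolength_one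
  haveI hSnt : Nontrivial (↥M ⧸ Submodule.comap M.subtype (Submodule.map φ M)) :=
    IsSimpleModule.nontrivial O _
  obtain ⟨s, hs0⟩ := exists_ne (0 : ↥M ⧸ Submodule.comap M.subtype (Submodule.map φ M))
  have hspan_s : Submodule.span O {s} = ⊤ := by
    rcases eq_bot_or_eq_top (Submodule.span O {s}) with h | h
    · exact absurd (Submodule.span_singleton_eq_bot.mp h) hs0
    · exact h
  have hπS : ∀ t : ↥M ⧸ Submodule.comap M.subtype (Submodule.map φ M), π • t = 0 := by
    intro t
    rcases eq_bot_or_eq_top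
      (Ideal.span {π} • (⊤ : Submodule O (↥M ⧸ Submodule.comap M.subtype (Submodule.map φ M))))
      with hX | hX
    · have h1 : π • t ∈ (Ideal.span {π} •
          (⊤ : Submodule O (↥M ⧸ Submodule.comap M.subtype (Submodule.map φ M)))) :=
        Submodule.smul_mem_smul (Ideal.mem_span_singleton_self π) trivial
      rw [hX] at h1
      exact h1
    · exfalso
      have hs_mem : s ∈ (Ideal.span {π} •
          (⊤ : Submodule O (↥M ⧸ Submodule.comap M.subtype (Submodule.map φ M)))) := by
        rw [hX]; trivial
      obtain ⟨t', -, ht'⟩ := (IsoAux.mem_ideal_span_singleton_smul π ⊤ s).mp hs_mem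
      have ht'' : t' ∈ Submodule.span O {s} := by rw [hspan_s]; trivial
      obtain ⟨c, hc⟩ := Submodule.mem_span_singleton.mp ht''
      have h1 : (1 - π * c) • s = 0 := by
        rw [sub_smul, one_smul, mul_smul, hc, ht', sub_self]
      have hu : IsUnit (1 - π * c) :=
        IsLocalRing.isUnit_one_sub_self_of_mem_nonunits _
          (mem_nonunits_iff.mpr fun h => hπ.not_isUnit (isUnit_of_mul_isUnit_left h))
      obtain ⟨u, hu⟩ := hu
      apply hs0
      calc s = (1 : O) • s := (one_smul O s).symm
        _ = ((↑u⁻¹ * ↑u : O)) • s := by rw [Units.inv_mul]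
        _ = (↑u⁻¹ : O) • (((u : O)) • s) := mul_smul _ _ _
        _ = (↑u⁻¹ : O) • ((1 - π * c) • s) := by rw [hu]
        _ = 0 := by rw [h1, smul_zero]
  have hπφM : ∀ m : ↥M, π • (m : N) ∈ Submodule.map φ M := by
    intro m
    have h1 := hπS (Submodule.Quotient.mk m)
    rw [← Submodule.Quotient.mk_smul, Submodule.Quotient.mk_eq_zero] at h1
    simpa using h1
  have hF2a : (Ideal.span {π} • M : Submodule O N) ≤ Submodule.map φ M := by
    refine Submodule.smul_le.mpr fun r hr m hm => ?_
    obtain ⟨d, hd⟩ := Ideal.mem_span_singleton.mp hr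
    rw [hd, mul_comm, mul_smul]
    exact Submodule.smul_mem _ d (hπφM ⟨m, hm⟩)
  -- the generator x
  obtain ⟨xb, hxb⟩ := Submodule.Quotient.mk_surjective _ s
  have hgen : M = Submodule.map φ M ⊔ Submodule.span O {(xb : N)} := by
    refine le_antisymm ?_ (sup_le hsub (Submodule.span_le.mpr (by simpa using xb.2)))
    intro m hm
    have hmem : Submodule.Quotient.mk (p := Submodule.comap M.subtype (Submodule.map φ M))
        (⟨m, hm⟩ : ↥M) ∈ Submodule.span O {s} := by rw [hspan_s]; trivial
    obtain ⟨c, hc⟩ := Submodule.mem_span_singleton.mp hmem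
    rw [← hxb, ← Submodule.Quotient.mk_smul] at hc
    have h1 : (⟨m, hm⟩ : ↥M) - c • xb ∈ Submodule.comap M.subtype (Submodule.map φ M) :=
      (Submodule.Quotient.eq _).mp hc.symm
    have h2 : m - c • (xb : N) ∈ Submodule.map φ M := by simpa using h1
    have h3 : m = (m - c • (xb : N)) + c • (xb : N) := by abel
    rw [h3]
    exact Submodule.add_mem_sup h2
      (Submodule.smul_mem _ c (Submodule.mem_span_singleton_self _))
  -- the sequence y k = φ^k x
  let y : ℕ → N := fun k => Nat.rec (xb : N) (fun _ z => φ z) k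
  have hiter_gen : ∀ k, iterImage φ M k =
      iterImage φ M (k + 1) ⊔ Submodule.span O {y k} := by
    intro k
    induction k with
    | zero => exact hgen
    | succ k ih =>
      show Submodule.map φ (iterImage φ M k) = _
      rw [ih, Submodule.map_sup, Submodule.map_span, Set.image_singleton]
      rfl
  have hy_iter : ∀ k, y k ∈ iterImage φ M k := by
    intro k
    rw [hiter_gen k]
    exact Submodule.mem_sup_right (Submodule.mem_span_singleton_self _)
  have hyM : ∀ k, y k ∈ M := fun k => h_iter_le k (hy_iter k)
  -- π-step lemmas
  have hφP : Submodule.map φ (Ideal.span {π} • M) ≤ (Ideal.span {π} • M : Submodule O N) := by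
    rw [Submodule.map_le_iff_le_comap]
    refine Submodule.smul_le.mpr fun r hr m hm => ?_
    have h1 : φ (r • m) ∈ (Ideal.span {π} • M : Submodule O N) := by
      rw [LinearMap.map_smulₛₗ]
      refine Submodule.smul_mem_smul ?_ (hsub (Submodule.mem_map_of_mem hm))
      exact he_mem e r hr
    exact h1
  have hC : ∀ k, Ideal.span {π} • iterImage φ M k ≤ iterImage φ M (k + 1) := by
    intro k
    induction k with
    | zero => exact hF2a
    | succ k ih =>
      refine Submodule.smul_le.mpr fun r hr z hz => ?_
      obtain ⟨a, ha, rfl⟩ := hz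
      have h1 : σ (e.symm r) = r := e.apply_symm_apply r
      have h2 : e.symm r ∈ Ideal.span {π} := he_mem e.symm r hr
      have h3 : (e.symm r) • a ∈ iterImage φ M (k + 1) := ih (Submodule.smul_mem_smul h2 ha)
      have h4 : r • φ a = φ ((e.symm r) • a) := by rw [LinearMap.map_smulₛₗ, h1]
      rw [h4]
      exact Submodule.mem_map_of_mem h3
  -- the chain D
  let D : ℕ → Submodule O N := fun k => iterImage φ M k ⊔ Ideal.span {π} • M
  have hD : ∀ k, D k = iterImage φ M k ⊔ Ideal.span {π} • M := fun _ => rfl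
  have hDanti : ∀ k, D (k + 1) ≤ D k := fun k => sup_le_sup_right (h_iter_anti k) _
  have hPD : ∀ k, (Ideal.span {π} • M : Submodule O N) ≤ D k := fun k => le_sup_right
  have hDM : ∀ k, D k ≤ M := fun k => sup_le (h_iter_le k) hPM
  have hprop : ∀ k, D (k + 1) = D k → D (k + 2) = D (k + 1) := by
    intro k h
    refine le_antisymm (sup_le ((h_iter_anti (k + 1)).trans le_sup_left) le_sup_right)
      (sup_le ?_ le_sup_right)
    calc iterImage φ M (k + 1) = Submodule.map φ (iterImage φ M k) := rfl
      _ ≤ Submodule.map φ (D k) := Submodule.map_mono le_sup_left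
      _ = Submodule.map φ (D (k + 1)) := by rw [h]
      _ = Submodule.map φ (iterImage φ M (k + 1)) ⊔ Submodule.map φ (Ideal.span {π} • M) :=
        Submodule.map_sup _ _ _
      _ ≤ iterImage φ M (k + 2) ⊔ Ideal.span {π} • M := sup_le_sup le_rfl hφP
      _ = D (k + 2) := rfl
  have hpropn : ∀ k, D (k + 1) = D k → ∀ m, D (k + m) = D k := by
    intro k h
    have hstep : ∀ m, D (k + m + 1) = D (k + m) := by
      intro m
      induction m with
      | zero => exact h
      | succ m ih2 => exact hprop _ ih2
    intro m
    induction m with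
    | zero => rfl
    | succ m ih => rw [show k + (m + 1) = k + m + 1 from rfl, hstep m, ih]
  have h_iter_nil : ∀ m, iterImage φ M (j + m) ≤ (Ideal.span {π} • M : Submodule O N) := by
    intro m
    induction m with
    | zero => exact hjP
    | succ m ih =>
      show Submodule.map φ (iterImage φ M (j + m)) ≤ _
      exact (Submodule.map_mono ih).trans hφP
  have hcollapse : ∀ k, D (k + 1) = D k → D k = Ideal.span {π} • M := by
    intro k h
    have h1 := hpropn k h j
    have h2 : D (k + j) = Ideal.span {π} • M := by
      rw [hD]
      refine sup_eq_right.mpr ?_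
      rw [add_comm]
      exact h_iter_nil k
    rw [← h1, h2]
  -- generation of M over D k
  have hMgen : ∀ k, M ≤ D k ⊔ Submodule.span O (Set.range fun i : Fin k => y ↑i) := by
    intro k
    induction k with
    | zero => exact le_sup_of_le_left le_sup_left
    | succ k ih =>
      refine ih.trans ?_
      have h1 : D k ≤ D (k + 1) ⊔ Submodule.span O {y k} := by
        calc D k = iterImage φ M k ⊔ Ideal.span {π} • M := rfl
          _ = (iterImage φ M (k + 1) ⊔ Submodule.span O {y k}) ⊔ Ideal.span {π} • M := by
            rw [← hiter_gen k]
          _ ≤ D (k + 1) ⊔ Submodule.span O {y k} :=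
            sup_le (sup_le (le_sup_of_le_left le_sup_left) le_sup_right)
              (le_sup_of_le_left le_sup_right)
      refine (sup_le_sup_right h1 _).trans ?_
      rw [sup_assoc]
      refine sup_le_sup_left (sup_le ?_ ?_) _
      · refine Submodule.span_le.mpr ?_
        rintro z hz
        rw [Set.mem_singleton_iff] at hz
        subst hz
        exact Submodule.subset_span ⟨Fin.last k, rfl⟩
      · refine Submodule.span_le.mpr ?_
        rintro z ⟨i, rfl⟩
        exact Submodule.subset_span ⟨i.castSucc, by simp⟩
  -- membership transfer between P ⊆ N and p ⊆ ↥M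
  have hPp : ∀ z : ↥M, (z : N) ∈ (Ideal.span {π} • M : Submodule O N) →
      z ∈ (Ideal.span {π} • ⊤ : Submodule O ↥M) := by
    intro z hz
    obtain ⟨a, haM, ha⟩ := (IsoAux.mem_ideal_span_singleton_smul π M (z : N)).mp hz
    have h1 : z = π • (⟨a, haM⟩ : ↥M) := Subtype.ext ha.symm
    rw [h1]
    exact (IsoAux.mem_ideal_span_singleton_smul π ⊤ _).mpr ⟨⟨a, haM⟩, trivial, rfl⟩
  have hpP : ∀ z : ↥M, z ∈ (Ideal.span {π} • ⊤ : Submodule O ↥M) →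
      (z : N) ∈ (Ideal.span {π} • M : Submodule O N) := by
    intro z hz
    obtain ⟨a, -, ha⟩ := (IsoAux.mem_ideal_span_singleton_smul π ⊤ z).mp hz
    rw [← ha]
    exact Submodule.smul_mem_smul (Ideal.mem_span_singleton_self π) a.2
  -- strictness of the chain D
  have hstrictD : ∀ k < n, D (k + 1) < D k := by
    intro k hk
    refine lt_of_le_of_ne (hDanti k) fun heq => ?_
    have hP' := hcollapse k heq
    have hM' : M ≤ Ideal.span {π} • M ⊔
        Submodule.span O (Set.range fun i : Fin k => y ↑i) := by
      have := hMgen k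
      rwa [hP'] at this
    set w' : Fin k → ↥M := fun i => ⟨y ↑i, hyM ↑i⟩ with hw'
    have hmap : Submodule.span O (Set.range fun i : Fin k => y ↑i) =
        Submodule.map M.subtype (Submodule.span O (Set.range w')) := by
      rw [Submodule.map_span]
      congr 1
      rw [← Set.range_comp]
      rfl
    have hspan' : (⊤ : Submodule O ↥M) ≤
        (Ideal.span {π} • ⊤ : Submodule O ↥M) ⊔ Submodule.span O (Set.range w') := by
      rintro m -
      have hm := hM' m.2
      rw [hmap] at hm
      obtain ⟨a, ha, c, hc, hsum⟩ := Submodule.mem_sup.mp hm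
      obtain ⟨c', hc', hcc⟩ := hc
      have hme : m = ⟨a, hPM ha⟩ + c' := by
        refine Subtype.ext ?_
        show (m : N) = a + (c' : N)
        have hcc' : (c' : N) = c := hcc
        rw [hcc', hsum]
      rw [hme]
      exact Submodule.add_mem_sup (hPp ⟨a, hPM ha⟩ ha) hc'
    have := IsoAux.span_bound hπ bM w' hspan'
    omega
  -- identification of chainD with D
  have hchain : ∀ k, chainD π φ M k = D k := by
    intro k
    match k with
    | 0 => exact (sup_eq_left.mpr hPM).symm
    | 1 => exact (sup_eq_left.mpr hF2a).symm
    | (k + 2) => rfl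
  refine ⟨fun k hk => by rw [hchain, hchain]; exact hstrictD k hk, ?_⟩
  -- Part 2 : φⁿ(M) = πM
  -- first, D n ≤ πM via the chain bound in M/πM
  let E : ℕ → Submodule O ↥M := fun k => Submodule.comap M.subtype (D k)
  have hE0 : E 0 = ⊤ := by
    show Submodule.comap M.subtype (D 0) = ⊤
    have : D 0 = M := by
      rw [hD]
      exact sup_eq_left.mpr hPM
    rw [this]
    exact Submodule.comap_subtype_self M
  have hEp : ∀ k, (Ideal.span {π} • ⊤ : Submodule O ↥M) ≤ E k := by
    intro k z hz
    exact (hPD k) (hpP z hz)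
  have hEstrict : ∀ k < n, E (k + 1) < E k := by
    intro k hk
    refine lt_of_le_of_ne (Submodule.comap_mono (hDanti k)) fun h => ?_
    have h2 := congrArg (Submodule.map M.subtype) h
    rw [Submodule.map_comap_subtype, Submodule.map_comap_subtype,
      inf_eq_right.mpr (hDM (k + 1)), inf_eq_right.mpr (hDM k)] at h2
    exact (hstrictD k hk).ne h2
  have hEn := IsoAux.chain_bound hπ bM E hE0 hEp hEstrict
  have hDnP : D n ≤ (Ideal.span {π} • M : Submodule O N) := by
    intro z hz
    exact hpP ⟨z, hDM n hz⟩ (hEn hz)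
  -- second, πM ≤ φⁿ(M) via the covering dichotomy
  have hP_le_iter : ∀ k, k ≤ n → (Ideal.span {π} • M : Submodule O N) ≤ iterImage φ M k := by
    intro k
    induction k with
    | zero => intro _; exact hPM
    | succ k ih =>
      intro hk1
      have hk : k < n := hk1
      have hPk := ih hk.le
      have hy' : π • y k ∈ iterImage φ M (k + 1) :=
        hC k (Submodule.smul_mem_smul (Ideal.mem_span_singleton_self π) (hy_iter k))
      have hBA : iterImage φ M (k + 1) ⊔ Ideal.span {π} • M ≤
          iterImage φ M (k + 1) ⊔ Submodule.span O {y k} := by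
        refine sup_le le_sup_left ?_
        exact hPk.trans (hiter_gen k).le
      rcases IsoAux.dvr_dichotomy hπ hy' le_sup_left hBA with h | h
      · exact le_sup_right.trans h.le
      · exfalso
        have hD1 : D (k + 1) = D k := by
          have e1 : D (k + 1) = iterImage φ M k := by
            rw [hD, h, ← hiter_gen k]
          have e2 : D k = iterImage φ M k := by
            rw [hD]
            exact sup_eq_left.mpr hPk
          rw [e1, e2]
        exact (hstrictD k hk).ne hD1
  exact le_antisymm (le_sup_left.trans hDnP) (hP_le_iter n le_rfl)
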